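/- For every face F of Q there exists an element a_F ∈ F such that a_F + Q^F ⊆ Q, where Q^F = (Q + F^gp) ∩ Q^sat is the partial saturation of Q at F. -/

import Mathlib

open Finset in
/-- Finite basis (Dickson): any subset of `ι → ℕ` has a finite subset of minimal elements
below every element. -/
lemma exists_finite_basis {ι : Type*} [Fintype ι] (S : Set (ι → ℕ)) :
    ∃ G : Set (ι → ℕ), G ⊆ S ∧ G.Finite ∧ ∀ x ∈ S, ∃ g ∈ G, g ≤ x := by
  refine ⟨{g ∈ S | ∀ y ∈ S, y ≤ g → g ≤ y}, fun g hg => hg.1, ?_, ?_⟩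
  · have hp : Set.IsPWO {g ∈ S | ∀ y ∈ S, y ≤ g → g ≤ y} :=
      Set.isPWO_of_wellQuasiOrderedLE _
    refine IsAntichain.finite_of_partiallyWellOrderedOn ?_ hp
    intro a ha b hb hab hle
    exact hab (le_antisymm hle (hb.2 a ha.1 hle))
  · have key : ∀ n : ℕ, ∀ x ∈ S, (∑ i, x i) = n →
        ∃ g ∈ S, (∀ y ∈ S, y ≤ g → g ≤ y) ∧ g ≤ x := by
      intro n
      induction n using Nat.strong_induction_on with
      | _ n ih =>
        intro x hx hxn
        by_cases hmin : ∀ y ∈ S, y ≤ x → x ≤ y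
        · exact ⟨x, hx, hmin, le_refl x⟩
        · push_neg at hmin
          obtain ⟨y, hyS, hyx, hxy⟩ := hmin
          obtain ⟨i, hi⟩ : ∃ i, ¬ x i ≤ y i := by
            by_contra h; push_neg at h; exact hxy h
          have hlt : (∑ i, y i) < n := by
            subst hxn
            exact Finset.sum_lt_sum (fun i _ => hyx i) ⟨i, Finset.mem_univ i, lt_of_not_ge hi⟩
          obtain ⟨g, hgS, hgmin, hgy⟩ := ih _ hlt y hyS rfl
          exact ⟨g, hgS, hgmin, hgy.trans hyx⟩
    intro x hx
    obtain ⟨g, h1, h2, h3⟩ := key _ x hx rfl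
    exact ⟨g, ⟨h1, h2⟩, h3⟩

lemma sub_of_mem_groupClosure {d : ℕ} (F : AddSubmonoid (Fin d → ℤ)) {g}
    (hg : g ∈ AddSubgroup.closure (F : Set (Fin d → ℤ))) :
    ∃ f1 ∈ F, ∃ f2 ∈ F, g = f1 - f2 := by
  induction hg using AddSubgroup.closure_induction with
  | mem x hx => exact ⟨x, hx, 0, F.zero_mem, by simp⟩
  | zero => exact ⟨0, F.zero_mem, 0, F.zero_mem, by simp⟩
  | add x y hx hy ihx ihy =>
      obtain ⟨a, ha, b, hb, rfl⟩ := ihx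
      obtain ⟨c, hc, e, he, rfl⟩ := ihy
      exact ⟨a + c, F.add_mem ha hc, b + e, F.add_mem hb he, by abel⟩
  | neg x hx ihx =>
      obtain ⟨a, ha, b, hb, rfl⟩ := ihx
      exact ⟨b, hb, a, ha, by abel⟩

/-- A face of `Q`: a submonoid `F ⊆ Q` such that `a + b ∈ F` with `a, b ∈ Q` forces
`a ∈ F` and `b ∈ F`. -/
def IsFaceOfMonoid {d : ℕ} (Q F : AddSubmonoid (Fin d → ℤ)) : Prop :=
  (F : Set (Fin d → ℤ)) ⊆ (Q : Set (Fin d → ℤ)) ∧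
    ∀ a ∈ Q, ∀ b ∈ Q, a + b ∈ F → a ∈ F ∧ b ∈ F

/-- The saturation `Q^sat = {x ∈ ℤ^d : n • x ∈ Q for some integer n ≥ 1}`. -/
def saturationOf {d : ℕ} (Q : AddSubmonoid (Fin d → ℤ)) : Set (Fin d → ℤ) :=
  {x | ∃ n : ℕ, 1 ≤ n ∧ n • x ∈ Q}

/-- The partial saturation `Q^F = (Q + F^gp) ∩ Q^sat` of `Q` at a face `F`. -/
def partialSat {d : ℕ} (Q F : AddSubmonoid (Fin d → ℤ)) : Set (Fin d → ℤ) :=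
  {x | ∃ q ∈ Q, ∃ g ∈ AddSubgroup.closure (F : Set (Fin d → ℤ)), x = q + g} ∩
    saturationOf Q

/-- For every face `F` of `Q` there exists `a_F ∈ F` with `a_F + Q^F ⊆ Q`. -/
theorem stmt9 {d : ℕ} (Q : AddSubmonoid (Fin d → ℤ)) (hFG : Q.FG)
    (hgp : AddSubgroup.closure (Q : Set (Fin d → ℤ)) = ⊤)
    (F : AddSubmonoid (Fin d → ℤ)) (hF : IsFaceOfMonoid Q F) :
    ∃ aF ∈ F, ∀ x ∈ partialSat Q F, aF + x ∈ Q := by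
  classical
  obtain ⟨s, hs⟩ := hFG
  set ι := {x : Fin d → ℤ // x ∈ s} with hι
  let q : ι → (Fin d → ℤ) := fun i => (i : Fin d → ℤ)
  set π : (ι → ℕ) → (Fin d → ℤ) := fun a => ∑ i, a i • q i with hπ
  have hπQ : ∀ a, π a ∈ Q := by
    intro a
    refine AddSubmonoid.sum_mem _ fun i _ => AddSubmonoid.nsmul_mem _ ?_ _
    rw [← hs]; exact AddSubmonoid.subset_closure i.2
  have hπadd : ∀ a b, π (a + b) = π a + π b := by
    intro a b
    simp only [hπ, Pi.add_apply, add_smul, Finset.sum_add_distrib]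
  have hmem : ∀ x ∈ Q, ∃ a, x = π a := by
    intro x hx
    rw [← hs] at hx
    induction hx using AddSubmonoid.closure_induction with
    | mem y hy =>
        refine ⟨Pi.single ⟨y, hy⟩ 1, ?_⟩
        have : π (Pi.single ⟨y, hy⟩ 1) = y := by
          show (∑ i : ι, (Pi.single (⟨y, hy⟩ : ι) 1 : ι → ℕ) i • q i) = y
          rw [Finset.sum_eq_single (⟨y, hy⟩ : ι)]
          · simp [q]
          · intro i _ hne
            rw [Pi.single_eq_of_ne hne, zero_smul]
          · intro h
            exact absurd (Finset.mem_univ _) h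
        exact this.symm
    | zero =>
        refine ⟨0, ?_⟩
        symm
        show (∑ i : ι, (0 : ι → ℕ) i • q i) = 0
        simp
    | add u v hu hv ihu ihv =>
        obtain ⟨a, rfl⟩ := ihu
        obtain ⟨b, rfl⟩ := ihv
        exact ⟨a + b, (hπadd a b).symm⟩
  set C : Fin d → ℤ := fun j => ∑ i, |q i j| with hC
  -- decomposition of saturation elements
  have satdec : ∀ x ∈ saturationOf Q, ∃ b k, (∀ j, |b j| ≤ C j) ∧ x = b + π k := by
    rintro x ⟨n, hn, hnx⟩
    obtain ⟨a, ha⟩ := hmem _ hnx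
    set k : ι → ℕ := fun i => a i / n with hk
    set r : ι → ℕ := fun i => a i % n with hr
    have hark : ∀ i, a i = n * k i + r i := fun i => (Nat.div_add_mod (a i) n).symm
    have hπa : π a = n • π k + π r := by
      simp only [hπ, Finset.smul_sum, ← Finset.sum_add_distrib]
      refine Finset.sum_congr rfl fun i _ => ?_
      rw [hark i, add_smul, mul_smul]
    have hnb : n • (x - π k) = π r := by
      rw [smul_sub, ha, hπa]; abel
    refine ⟨x - π k, k, ?_, by abel⟩
    intro j
    have hrn : ∀ i : ι, (r i : ℤ) ≤ (n : ℤ) := fun i =>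
      Int.ofNat_le.2 (le_of_lt (Nat.mod_lt _ (by omega)))
    have h1 : (n : ℤ) * |x j - π k j| = |π r j| := by
      rw [← hnb]
      have : (n • (x - π k)) j = (n : ℤ) * (x j - π k j) := by
        simp [Pi.smul_apply, nsmul_eq_mul]
      rw [this, abs_mul, abs_of_nonneg (by positivity : (0:ℤ) ≤ (n:ℤ))]
    have h2 : |π r j| ≤ (n : ℤ) * C j := by
      have hπrj : π r j = ∑ i, (r i : ℤ) * q i j := by
        simp [hπ, Finset.sum_apply, Pi.smul_apply, nsmul_eq_mul]
      rw [hπrj, hC, Finset.mul_sum]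
      refine le_trans (Finset.abs_sum_le_sum_abs _ _) (Finset.sum_le_sum fun i _ => ?_)
      rw [abs_mul, abs_of_nonneg (by positivity : (0:ℤ) ≤ (r i : ℤ))]
      exact mul_le_mul_of_nonneg_right (hrn i) (abs_nonneg _)
    have h3 : (n : ℤ) * |x j - π k j| ≤ (n : ℤ) * C j := h1 ▸ h2
    have hn' : (0 : ℤ) < n := by exact_mod_cast hn
    exact le_of_mul_le_mul_left h3 hn'
  -- the finite box
  set Box : Set (Fin d → ℤ) := Set.pi Set.univ (fun j => Set.Icc (-(C j)) (C j)) with hBox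
  have hboxfin : Box.Finite := Set.Finite.pi fun j => Set.finite_Icc _ _
  -- finite bases of the fibers
  have hbasis := fun b : Fin d → ℤ =>
    exists_finite_basis {t : ι → ℕ | b + π t ∈ partialSat Q F}
  choose G hGsub hGfin hGdom using hbasis
  set Y : Set (Fin d → ℤ) := ⋃ b ∈ Box, (fun t => b + π t) '' (G b) with hY
  have hYfin : Y.Finite := Set.Finite.biUnion hboxfin (fun b _ => ((hGfin b).image _))
  have hYsub : Y ⊆ partialSat Q F := by
    intro y hy
    simp only [hY, Set.mem_iUnion, Set.mem_image] at hy
    obtain ⟨b, hb, t, ht, rfl⟩ := hy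
    exact hGsub b ht
  have hcover : ∀ x ∈ partialSat Q F, ∃ y ∈ Y, ∃ c, x = y + π c := by
    intro x hx
    obtain ⟨b, k, hbB, hxbk⟩ := satdec x hx.2
    have hbBox : b ∈ Box := by
      intro j _
      exact abs_le.1 (hbB j)
    have hkS : k ∈ {t : ι → ℕ | b + π t ∈ partialSat Q F} := by
      show b + π k ∈ partialSat Q F
      rw [← hxbk]; exact hx
    obtain ⟨g, hg, hgk⟩ := hGdom b k hkS
    refine ⟨b + π g, ?_, fun i => k i - g i, ?_⟩
    · exact Set.mem_biUnion hbBox (Set.mem_image_of_mem _ hg)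
    · have hgk' : g + (fun i => k i - g i) = k := funext fun i => Nat.add_sub_cancel' (hgk i)
      rw [hxbk, add_assoc, ← hπadd, hgk']
  -- choose conductors for each generator
  have hfex : ∀ y : Fin d → ℤ, ∃ f, f ∈ F ∧ (y ∈ Y → f + y ∈ Q) := by
    intro y
    by_cases hy : y ∈ Y
    · obtain ⟨⟨qy, hq, g, hg, rfl⟩, -⟩ := hYsub hy
      obtain ⟨f1, hf1, f2, hf2, rfl⟩ := sub_of_mem_groupClosure F hg
      refine ⟨f2, hf2, fun _ => ?_⟩
      have h : f2 + (qy + (f1 - f2)) = qy + f1 := by abel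
      rw [h]; exact Q.add_mem hq (hF.1 hf1)
    · exact ⟨0, F.zero_mem, fun h => absurd h hy⟩
  choose f hfF hfQ using hfex
  refine ⟨∑ y ∈ hYfin.toFinset, f y, AddSubmonoid.sum_mem _ (fun y _ => hfF y), ?_⟩
  intro x hx
  obtain ⟨y, hyY, c, rfl⟩ := hcover x hx
  have hymem : y ∈ hYfin.toFinset := hYfin.mem_toFinset.2 hyY
  rw [← Finset.add_sum_erase _ f hymem]
  have h2 : ∑ y' ∈ hYfin.toFinset.erase y, f y' ∈ Q :=
    AddSubmonoid.sum_mem _ fun y' _ => hF.1 (hfF y')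
  have hre : f y + ∑ y' ∈ hYfin.toFinset.erase y, f y' + (y + π c)
      = (f y + y) + ((∑ y' ∈ hYfin.toFinset.erase y, f y') + π c) := by abel
  rw [hre]
  exact Q.add_mem (hfQ y hyY) (Q.add_mem h2 (hπQ c))
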